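/- arXiv:1908.04365 — 5 statements merged into one kernel-verified Lean document; each statement's English description precedes it below -/
import Mathlib

section
/- The formal power series Φ(q) ∈ ℤ[[q]] defined by Φ = (q² + q − 1 + √(q⁴ + 2q³ − q² + 2q + 1))/(2q), i.e., the unique power series solution with constant term 1 of q·Φ² − (q² + q − 1)·Φ − 1 = 0, exists and is unique: there is exactly one F ∈ ℤ[[q]] with F(0) = 1 satisfying q·F² − (q² + q − 1)·F − 1 = 0. -/
open PowerSeries

private def qga : ℕ → ℤ
  | 0 => 1
  | n + 1 =>
      qga n + (match n with | 0 => 0 | m + 1 => qga m) -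
        ∑ i ∈ (Finset.range (n + 1)).attach, qga i.1 * qga (n - i.1)
  decreasing_by
  all_goals first
    | omega
    | (have := Finset.mem_range.mp i.2; omega)

private def qgF : PowerSeries ℤ := PowerSeries.mk qga

private lemma coeff_qgF (n : ℕ) : (coeff n) qgF = qga n := coeff_mk n qga

private lemma qga_succ (n : ℕ) :
    qga (n + 1) = qga n + (match n with | 0 => 0 | m + 1 => qga m) -
      ∑ i ∈ Finset.range (n + 1), qga i * qga (n - i) := by
  conv_lhs => unfold qga
  rw [Finset.sum_attach _ (fun i => qga i * qga (n - i))]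

private lemma coeff_sq (n : ℕ) :
    (coeff n) (qgF * qgF) = ∑ i ∈ Finset.range (n + 1), qga i * qga (n - i) := by
  rw [PowerSeries.coeff_mul, Finset.Nat.sum_antidiagonal_eq_sum_range_succ_mk]
  simp [qgF]

private lemma qgF_eq : qgF = 1 + X * qgF + X ^ 2 * qgF - X * (qgF * qgF) := by
  ext n
  cases n with
  | zero =>
      simp [qgF, qga]
  | succ n =>
      rw [map_sub, map_add, map_add, PowerSeries.coeff_succ_X_mul,
        PowerSeries.coeff_succ_X_mul, coeff_sq]
      cases n with
      | zero =>
          have h1 : (coeff 1) (X ^ 2 * qgF : PowerSeries ℤ) = 0 := by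
            rw [pow_two, mul_assoc, PowerSeries.coeff_succ_X_mul]
            simp [PowerSeries.coeff_zero_eq_constantCoeff]
          rw [h1]
          simp [qgF, qga_succ, qga]
      | succ m =>
          have h2 : (coeff (m + 1 + 1)) (X ^ 2 * qgF : PowerSeries ℤ) =
              (coeff m) qgF := by
            have := PowerSeries.coeff_X_pow_mul qgF 2 m
            simpa [show m + 2 = m + 1 + 1 by ring] using this
          rw [h2]
          have hc : (coeff (m + 1 + 1)) (1 : PowerSeries ℤ) = 0 := by
            simp
          rw [hc]
          simp only [coeff_qgF]
          rw [qga_succ (m + 1)]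
          ring

private lemma qgF_root :
    X * qgF ^ 2 - (X ^ 2 + X - 1) * qgF - 1 = 0 := by
  linear_combination qgF_eq

/-- There is exactly one formal power series `F ∈ ℤ[[q]]` with constant term `1`
satisfying `q·F² − (q² + q − 1)·F − 1 = 0` (the `q`-deformed golden ratio). -/
theorem q_golden_ratio_exists_unique :
    ∃! F : PowerSeries ℤ, constantCoeff F = 1 ∧
      X * F ^ 2 - (X ^ 2 + X - 1) * F - 1 = 0 := by
  refine ⟨qgF, ⟨by simp [qgF, qga], qgF_root⟩, ?_⟩
  rintro G ⟨hG0, hG⟩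
  have hF := qgF_root
  have hF0 : constantCoeff qgF = 1 := by simp [qgF, qga]
  -- (G - qgF) * (X * (G + qgF) - (X^2 + X - 1)) = 0
  have key : (G - qgF) * (X * (G + qgF) - (X ^ 2 + X - 1)) = 0 := by
    have : (G - qgF) * (X * (G + qgF) - (X ^ 2 + X - 1)) =
        (X * G ^ 2 - (X ^ 2 + X - 1) * G - 1) -
        (X * qgF ^ 2 - (X ^ 2 + X - 1) * qgF - 1) := by ring
    rw [this, hG, hF, sub_zero]
  have hne : (X * (G + qgF) - (X ^ 2 + X - 1) : PowerSeries ℤ) ≠ 0 := by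
    intro h
    have := congrArg (constantCoeff) h
    simp [map_sub, map_add, map_mul, constantCoeff_X] at this
  rcases mul_eq_zero.mp key with h | h
  · exact sub_eq_zero.mp h
  · exact absurd h hne
end

section
/- The power series solution F ∈ ℤ[[q]] with F(0)=1 of q·F² − (q²+q−1)·F − 1 = 0 has integer coefficients, and its first coefficients are 1, 0, 1, −1, 2, −4, 8, −17, 37, −82, 185 (i.e., F = 1 + q² − q³ + 2q⁴ − 4q⁵ + 8q⁶ − 17q⁷ + 37q⁸ − 82q⁹ + 185q¹⁰ + O(q¹¹)). -/
open PowerSeries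

/-- The power series solution `F` with constant term `1` of
`q·F² − (q²+q−1)·F − 1 = 0` has integer coefficients, and its first coefficients
are `1, 0, 1, −1, 2, −4, 8, −17, 37, −82, 185`. -/
theorem q_golden_ratio_coeffs (F : PowerSeries ℚ)
    (h0 : constantCoeff F = 1)
    (heq : X * F ^ 2 - (X ^ 2 + X - 1) * F - 1 = 0) :
    (∀ n : ℕ, ∃ m : ℤ, coeff n F = (m : ℚ)) ∧
    coeff 0 F = 1 ∧ coeff 1 F = 0 ∧ coeff 2 F = 1 ∧ coeff 3 F = -1 ∧
    coeff 4 F = 2 ∧ coeff 5 F = -4 ∧ coeff 6 F = 8 ∧ coeff 7 F = -17 ∧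
    coeff 8 F = 37 ∧ coeff 9 F = -82 ∧ coeff 10 F = 185 := by
  have hA : F - 1 = X * (F + X * F - F ^ 2) := by linear_combination heq
  have hrec : ∀ n : ℕ, coeff (n+1) F =
      coeff n F + coeff n (X * F)
        - ∑ i ∈ Finset.range (n+1), coeff i F * coeff (n - i) F := by
    intro n
    have hsq : coeff n (F ^ 2)
        = ∑ i ∈ Finset.range (n+1), coeff i F * coeff (n-i) F := by
      rw [pow_two, coeff_mul, Finset.Nat.sum_antidiagonal_eq_sum_range_succ_mk]
    calc coeff (n+1) F = coeff (n+1) (F - 1) := by simp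
    _ = coeff n (F + X * F - F ^ 2) := by rw [hA, coeff_succ_X_mul]
    _ = _ := by rw [map_sub, map_add, hsq]
  have c0 : coeff 0 F = 1 := by simpa using h0
  have c1 : coeff 1 F = 0 := by
    have h := hrec 0
    simp [c0] at h
    simpa using h
  have hrec2 : ∀ n : ℕ, coeff (n+2) F =
      coeff (n+1) F + coeff n F
        - ∑ i ∈ Finset.range (n+2), coeff i F * coeff (n+1 - i) F := by
    intro n
    have h := hrec (n+1)
    rwa [coeff_succ_X_mul] at h
  have c2 : coeff 2 F = 1 := by
    have h := hrec2 0
    norm_num [Finset.sum_range_succ, c0, c1] at h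
    exact h
  have c3 : coeff 3 F = -1 := by
    have h := hrec2 1
    norm_num [Finset.sum_range_succ, c0, c1, c2] at h
    linarith
  have c4 : coeff 4 F = 2 := by
    have h := hrec2 2
    norm_num [Finset.sum_range_succ, c0, c1, c2, c3] at h
    linarith
  have c5 : coeff 5 F = -4 := by
    have h := hrec2 3
    norm_num [Finset.sum_range_succ, c0, c1, c2, c3, c4] at h
    linarith
  have c6 : coeff 6 F = 8 := by
    have h := hrec2 4
    norm_num [Finset.sum_range_succ, c0, c1, c2, c3, c4, c5] at h
    linarith
  have c7 : coeff 7 F = -17 := by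
    have h := hrec2 5
    norm_num [Finset.sum_range_succ, c0, c1, c2, c3, c4, c5, c6] at h
    linarith
  have c8 : coeff 8 F = 37 := by
    have h := hrec2 6
    norm_num [Finset.sum_range_succ, c0, c1, c2, c3, c4, c5, c6, c7] at h
    linarith
  have c9 : coeff 9 F = -82 := by
    have h := hrec2 7
    norm_num [Finset.sum_range_succ, c0, c1, c2, c3, c4, c5, c6, c7, c8] at h
    linarith
  have c10 : coeff 10 F = 185 := by
    have h := hrec2 8
    norm_num [Finset.sum_range_succ, c0, c1, c2, c3, c4, c5, c6, c7, c8, c9] at h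
    linarith
  refine ⟨?_, c0, c1, c2, c3, c4, c5, c6, c7, c8, c9, c10⟩
  intro n
  induction n using Nat.strong_induction_on with
  | _ n ih =>
    match n, ih with
    | 0, _ => exact ⟨1, by simpa using c0⟩
    | (m+1), ih =>
      set g : ℕ → ℤ := fun k => if h : k < m+1 then (ih k h).choose else 0 with hgdef
      have hg : ∀ k, k < m+1 → coeff k F = (g k : ℚ) := by
        intro k hk
        simp only [hgdef, dif_pos hk]
        exact (ih k hk).choose_spec
      have hx : ∃ t : ℤ, coeff m (X * F) = (t : ℚ) := by
        rcases m with _ | k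
        · exact ⟨0, by simp⟩
        · exact ⟨g k, by rw [coeff_succ_X_mul]; exact hg k (by omega)⟩
      obtain ⟨t, ht⟩ := hx
      refine ⟨g m + t - ∑ i ∈ Finset.range (m+1), g i * g (m-i), ?_⟩
      rw [hrec m, ht, hg m (by omega)]
      push_cast
      congr 1
      refine Finset.sum_congr rfl fun i hi => ?_
      rw [hg i (by simpa using Finset.mem_range.mp hi),
        hg (m - i) (by omega)]
end

section
/- The coefficients φ_k of the q-deformed golden ratio satisfy, for all k ≥ 4, the linear recurrence (k+1)·φ_k + (2k−1)·φ_{k−1} + (2−k)·φ_{k−2} + (2k−7)·φ_{k−3} + (k−5)·φ_{k−4} = 0. -/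
open PowerSeries

/-- The coefficients `φ_k` of the `q`-deformed golden ratio satisfy, for all `k ≥ 4`,
the linear recurrence
`(k+1)·φ_k + (2k−1)·φ_{k−1} + (2−k)·φ_{k−2} + (2k−7)·φ_{k−3} + (k−5)·φ_{k−4} = 0`. -/
theorem q_golden_ratio_recurrence (F : PowerSeries ℤ)
    (h0 : constantCoeff F = 1)
    (heq : X * F ^ 2 - (X ^ 2 + X - 1) * F - 1 = 0) :
    ∀ k : ℕ, 4 ≤ k →
      ((k : ℤ) + 1) * coeff k F + (2 * (k : ℤ) - 1) * coeff (k - 1) F +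
        (2 - (k : ℤ)) * coeff (k - 2) F + (2 * (k : ℤ) - 7) * coeff (k - 3) F +
        ((k : ℤ) - 5) * coeff (k - 4) F = 0 := by
  intro k hk
  obtain ⟨m, rfl⟩ : ∃ m, k = m + 4 := ⟨k - 4, by omega⟩
  set G : PowerSeries ℤ := d⁄dX ℤ F with hG
  -- derivative of the defining equation
  have hd : (d⁄dX ℤ) (X * F ^ 2 - (X ^ 2 + X - 1) * F - 1)
      = F ^ 2 + 2 * X * F * G - (2 * X + 1) * F - (X ^ 2 + X - 1) * G := by
    have hF2 : (d⁄dX ℤ) (F ^ 2) = 2 * F * G := by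
      rw [pow_two, Derivation.leibniz]
      simp only [smul_eq_mul, hG]; ring
    have hX2 : (d⁄dX ℤ) (X ^ 2 : PowerSeries ℤ) = 2 * X := by
      rw [pow_two, Derivation.leibniz]
      simp only [smul_eq_mul, PowerSeries.derivative_X]; ring
    have hP : (d⁄dX ℤ) (X ^ 2 + X - 1 : PowerSeries ℤ) = 2 * X + 1 := by
      rw [map_sub, map_add, hX2, PowerSeries.derivative_X, Derivation.map_one_eq_zero]
      ring
    rw [map_sub, map_sub, Derivation.leibniz, Derivation.leibniz,
      Derivation.map_one_eq_zero, hF2, hP, PowerSeries.derivative_X]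
    simp only [smul_eq_mul, hG]
    ring
  have heq2 : F ^ 2 + 2 * X * F * G - (2 * X + 1) * F - (X ^ 2 + X - 1) * G = 0 := by
    rw [← hd, heq, map_zero]
  -- the linear ODE with polynomial coefficients, written additively
  have T0 : X ^ 4 * (X * G) + X ^ 3 * (X * G) + X ^ 3 * (X * G) - X ^ 2 * (X * G)
      + X * (X * G) + X * (X * G) + (X * G) - X ^ 4 * F - X ^ 3 * F + X * F + F
      - X ^ 2 - X ^ 2 - X ^ 2 - X - 1 = 0 := by
    linear_combination (-2 * X * F + 3 * X ^ 2 + X + 1 - 4 * X ^ 2 * G) * heq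
      + (2 * X ^ 2 * F - X ^ 3 - X ^ 2 + X) * heq2
  -- coefficients of X * G
  have c1 : ∀ n : ℕ, coeff n (X * G) = (n : ℤ) * coeff n F := by
    intro n
    cases n with
    | zero =>
        rw [coeff_zero_eq_constantCoeff_apply, map_mul, constantCoeff_X, zero_mul,
          Nat.cast_zero, zero_mul]
    | succ n =>
        rw [coeff_succ_X_mul, hG, PowerSeries.coeff_derivative]
        push_cast; ring
  have hT := congrArg (coeff (m + 4)) T0
  simp only [map_add, map_sub, map_zero] at hT
  rw [coeff_X_pow_mul (X * G) 4 m, coeff_X_pow_mul (X * G) 3 (m + 1),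
    coeff_X_pow_mul (X * G) 2 (m + 2), coeff_succ_X_mul (m + 3) (X * G),
    coeff_X_pow_mul F 4 m, coeff_X_pow_mul F 3 (m + 1), coeff_succ_X_mul (m + 3) F,
    c1, c1, c1, c1, c1] at hT
  have hx2 : coeff (m + 4) (X ^ 2 : PowerSeries ℤ) = 0 := by
    rw [coeff_X_pow]; simp
  have hx1 : coeff (m + 4) (X : PowerSeries ℤ) = 0 := by
    rw [coeff_X]; simp
  have hone : coeff (m + 4) (1 : PowerSeries ℤ) = 0 := by
    rw [coeff_one]; simp
  rw [hx2, hx1, hone] at hT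
  simp only [show m + 4 - 1 = m + 3 from rfl, show m + 4 - 2 = m + 2 from rfl,
    show m + 4 - 3 = m + 1 from rfl, show m + 4 - 4 = m from rfl]
  push_cast at hT ⊢
  linear_combination hT
end

section
/- The power series S ∈ ℤ[[q]] with S(0)=1 satisfying q·S² − (q³ + 2q − 1)·S − 1 = 0 exists and is unique in ℚ[[q]]: there is exactly one formal power series with constant term 1 solving this equation, and its coefficients are integers. -/
open PowerSeries

private def aInt : ℕ → ℤ
  | 0 => 1
  | (n+1) => (if 2 ≤ n then aInt (n-2) else 0) + 2 * aInt n
      - ∑ i ∈ (Finset.range (n+1)).attach, aInt i * aInt (n - i)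
  decreasing_by
  · omega
  · omega
  · have := i.2; simp only [Finset.mem_range] at this; omega
  · omega

private lemma aInt_key (n : ℕ) : aInt (n+1) = (if 2 ≤ n then aInt (n-2) else 0) + 2 * aInt n
      - ∑ i ∈ Finset.range (n+1), aInt i * aInt (n - i) := by
  rw [aInt, Finset.sum_attach (Finset.range (n+1)) (fun i => aInt i * aInt (n - i))]

noncomputable def Sq : PowerSeries ℚ := PowerSeries.mk fun n => (aInt n : ℚ)

private lemma coeff_Sq (n : ℕ) : coeff n Sq = (aInt n : ℚ) := coeff_mk n _

private lemma Sq_eq : X * Sq ^ 2 - (X ^ 3 + 2 * X - 1) * Sq - 1 = 0 := by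
  ext n
  rw [map_zero, map_sub, map_sub]
  have hexp : (X ^ 3 + 2 * X - 1) * Sq = X^3 * Sq + 2 * (X * Sq) - Sq := by ring
  rw [hexp, map_sub, map_add]
  cases n with
  | zero =>
    simp [coeff_Sq, coeff_zero_eq_constantCoeff]
    norm_num [aInt]
  | succ n =>
    have h1 : coeff (n+1) (X * Sq ^ 2) = ∑ i ∈ Finset.range (n+1), (aInt i : ℚ) * aInt (n - i) := by
      rw [coeff_succ_X_mul, sq, coeff_mul, Finset.Nat.sum_antidiagonal_eq_sum_range_succ_mk]
      simp [coeff_Sq]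
    have h2 : coeff (n+1) (X^3 * Sq) = if 2 ≤ n then (aInt (n-2) : ℚ) else 0 := by
      rw [coeff_X_pow_mul']
      rcases le_or_gt 2 n with h | h
      · rw [if_pos (by omega), if_pos h]
        have : n + 1 - 3 = n - 2 := by omega
        rw [this, coeff_Sq]
      · rw [if_neg (by omega), if_neg (by omega)]
    have h3 : coeff (n+1) (2 * (X * Sq)) = 2 * (aInt n : ℚ) := by
      have : (2 : PowerSeries ℚ) = C 2 := by simp [map_ofNat]
      rw [this, coeff_C_mul, coeff_succ_X_mul, coeff_Sq]
    have h4 : coeff (n+1) (1 : PowerSeries ℚ) = 0 := by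
      simp
    rw [h1, h2, h3, h4, coeff_Sq]
    have := aInt_key n
    have hQ : ((aInt (n+1) : ℤ) : ℚ) = ((if 2 ≤ n then aInt (n-2) else 0) + 2 * aInt n
      - ∑ i ∈ Finset.range (n+1), aInt i * aInt (n - i) : ℤ) := by exact_mod_cast this
    push_cast at hQ
    rw [hQ]
    split <;> ring

/-- The `q`-deformed silver ratio: there is exactly one formal power series in `ℚ[[q]]`
with constant term `1` satisfying `q·S² − (q³ + 2q − 1)·S − 1 = 0`, and its
coefficients are integers. -/
theorem q_silver_ratio_exists_unique :
    (∃! S : PowerSeries ℚ, constantCoeff S = 1 ∧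
        X * S ^ 2 - (X ^ 3 + 2 * X - 1) * S - 1 = 0) ∧
    (∀ S : PowerSeries ℚ, constantCoeff S = 1 →
        X * S ^ 2 - (X ^ 3 + 2 * X - 1) * S - 1 = 0 →
        ∀ n : ℕ, ∃ m : ℤ, coeff n S = (m : ℚ)) := by
  have hcc : constantCoeff Sq = 1 := by
    rw [← coeff_zero_eq_constantCoeff, coeff_Sq]; norm_num [aInt]
  have huniq : ∀ S : PowerSeries ℚ, constantCoeff S = 1 →
      X * S ^ 2 - (X ^ 3 + 2 * X - 1) * S - 1 = 0 → S = Sq := by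
    intro T hT1 hT2
    have hfac : (T - Sq) * (X * (T + Sq) - (X ^ 3 + 2 * X - 1)) = 0 := by
      have := Sq_eq
      linear_combination hT2 - this
    rcases mul_eq_zero.1 hfac with h | h
    · exact sub_eq_zero.1 h
    · exfalso
      have : constantCoeff (X * (T + Sq) - (X ^ 3 + 2 * X - 1)) = 1 := by
        simp [map_sub, map_add, map_mul, map_pow, hT1]
      rw [h, map_zero] at this
      norm_num at this
  refine ⟨⟨Sq, ⟨hcc, Sq_eq⟩, fun T hT => huniq T hT.1 hT.2⟩, ?_⟩
  intro T hT1 hT2 n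
  rw [huniq T hT1 hT2, coeff_Sq]
  exact ⟨aInt n, rfl⟩
end

section
/- There is a unique formal power series T ∈ ℚ[[q]] with constant term 1 satisfying q²·T² − (q³ + q² − q − 1)·T = q² + q + 1, and this T has integer coefficients beginning T = 1 + q² − q⁴ + 2q⁵ − 2q⁶ − q⁷ + O(q⁸). -/
open PowerSeries Finset

def qa : ℕ → ℤ
  | 0 => 1
  | 1 => 0
  | 2 => 1
  | (n+3) => -(∑ k ∈ (Finset.range (n+2)).attach, qa k.1 * qa (n+1-k.1))
      - qa (n+2) + qa (n+1) + qa n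
decreasing_by
  · have := k.2; simp only [Finset.mem_range] at this; omega
  · omega
  · omega
  · omega
  · omega

lemma qa_succ (n : ℕ) : qa (n+3) =
    -(∑ k ∈ Finset.range (n+2), qa k * qa (n+1-k)) - qa (n+2) + qa (n+1) + qa n := by
  rw [qa]; rw [Finset.sum_attach (Finset.range (n+2)) (fun k => qa k * qa (n+1-k))]

noncomputable def Tq : PowerSeries ℚ := PowerSeries.mk fun n => (qa n : ℚ)

lemma coeff_Tq (n : ℕ) : coeff n Tq = (qa n : ℚ) := coeff_mk n _

lemma coeff_Xpow_mul (f : PowerSeries ℚ) (k n : ℕ) :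
    coeff n (X ^ k * f) = if k ≤ n then coeff (n - k) f else 0 := by
  rw [mul_comm]; exact coeff_mul_X_pow' f k n

lemma key : X ^ 2 * Tq ^ 2 - (X ^ 3 + X ^ 2 - X - 1) * Tq = X ^ 2 + X + 1 := by
  have hsq : ∀ m : ℕ, coeff m (Tq ^ 2) =
      ∑ k ∈ Finset.range (m + 1), (qa k : ℚ) * (qa (m - k) : ℚ) := by
    intro m
    rw [sq, coeff_mul, Finset.Nat.sum_antidiagonal_eq_sum_range_succ_mk]
    simp [coeff_Tq]
  ext n
  simp only [map_sub, map_add, sub_mul, add_mul, one_mul, coeff_one, coeff_X,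
    coeff_Xpow_mul, coeff_X_pow, coeff_Tq]
  have hX : ∀ m : ℕ, coeff m (X * Tq) = if 1 ≤ m then (qa (m-1) : ℚ) else 0 := by
    intro m; rw [show (X : PowerSeries ℚ) = X ^ 1 by ring, coeff_Xpow_mul, ]
    simp [coeff_Tq]
  rw [hX]
  match n with
  | 0 => norm_num [qa]
  | 1 => norm_num [qa]
  | 2 => norm_num [hsq, Finset.sum_range_succ, qa]
  | (n+3) =>
    have h2 : (2 : ℕ) ≤ n + 3 := by omega
    have h3 : (3 : ℕ) ≤ n + 3 := by omega
    have h1 : (1 : ℕ) ≤ n + 3 := by omega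
    rw [if_pos h2, if_pos h3, if_pos h2, if_pos h1]
    have hn2 : n + 3 - 2 = n + 1 := by omega
    have hn3 : n + 3 - 3 = n := by omega
    have hn1 : n + 3 - 1 = n + 2 := by omega
    rw [hn2, hn3, hn1, hsq]
    have hrec := qa_succ n
    have : ((qa (n+3) : ℚ)) =
        -(∑ k ∈ Finset.range (n+2), (qa k : ℚ) * (qa (n+1-k) : ℚ)) -
          qa (n+2) + qa (n+1) + qa n := by
      rw [hrec]; push_cast; ring
    have hne2 : n + 3 ≠ 2 := by omega
    have hne1 : n + 3 ≠ 1 := by omega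
    have hne0 : n + 3 ≠ 0 := by omega
    rw [if_neg hne2, if_neg hne1, if_neg hne0, this]
    ring

lemma constTq : constantCoeff Tq = 1 := by
  rw [← coeff_zero_eq_constantCoeff, coeff_Tq]; norm_num [qa]

lemma uniq (T : PowerSeries ℚ) (h1 : constantCoeff T = 1)
    (h2 : X ^ 2 * T ^ 2 - (X ^ 3 + X ^ 2 - X - 1) * T = X ^ 2 + X + 1) : T = Tq := by
  have h3 : (T - Tq) * (X ^ 2 * (T + Tq) - (X ^ 3 + X ^ 2 - X - 1)) = 0 := by
    linear_combination h2 - key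
  rcases mul_eq_zero.mp h3 with h | h
  · exact sub_eq_zero.mp h
  · exfalso
    have := congrArg (constantCoeff) h
    simp [map_sub, map_add, map_mul, map_pow, constantCoeff_X] at this


/-- There is a unique formal power series `T ∈ ℚ[[q]]` with constant term `1`
satisfying `q²·T² − (q³ + q² − q − 1)·T = q² + q + 1` (the `q`-deformation of `√3`);
it has integer coefficients, beginning `1 + q² − q⁴ + 2q⁵ − 2q⁶ − q⁷ + O(q⁸)`. -/
theorem q_sqrt_three :
    (∃! T : PowerSeries ℚ, constantCoeff T = 1 ∧
        X ^ 2 * T ^ 2 - (X ^ 3 + X ^ 2 - X - 1) * T = X ^ 2 + X + 1) ∧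
    (∀ T : PowerSeries ℚ, constantCoeff T = 1 →
        X ^ 2 * T ^ 2 - (X ^ 3 + X ^ 2 - X - 1) * T = X ^ 2 + X + 1 →
        (∀ n : ℕ, ∃ m : ℤ, coeff n T = (m : ℚ)) ∧
        coeff 0 T = 1 ∧ coeff 1 T = 0 ∧ coeff 2 T = 1 ∧ coeff 3 T = 0 ∧
        coeff 4 T = -1 ∧ coeff 5 T = 2 ∧ coeff 6 T = -2 ∧ coeff 7 T = -1) := by
  constructor
  · exact ⟨Tq, ⟨constTq, key⟩, fun T h => uniq T h.1 h.2⟩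
  · intro T h1 h2
    rw [uniq T h1 h2]
    refine ⟨fun n => ⟨qa n, coeff_Tq n⟩, ?_, ?_, ?_, ?_, ?_, ?_, ?_, ?_⟩ <;>
      · rw [coeff_Tq]; norm_num [qa_succ, Finset.sum_range_succ, qa]
end
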